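/- Let G be a countable abelian group with a nondiscrete Hausdorff group topology τ having a countable neighborhood base at 0, and suppose τ' is a Hausdorff group topology transversal to τ. Then τ' can be weakened to a Hausdorff group topology τ'' ≤ τ' that is still transversal to τ and is first countable (has a countable neighborhood base at 0). -/

import Mathlib

open Filter Set Function Topology Pointwise

section aux

variable {G : Type*} [AddCommGroup G] [TopologicalSpace G] [IsTopologicalAddGroup G]

private lemma aux_translate {U : Set G} (hU : U ∈ 𝓝 (0 : G)) (x : G) :
    (x + ·) '' U ∈ 𝓝 x := by
  rw [← map_add_left_nhds_zero x]
  exact image_mem_map hU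

private lemma seq_step [T2Space G] {W : Set G} (hW : W ∈ 𝓝 (0 : G)) (g : G) :
    ∃ V : Set G, V ∈ 𝓝 (0 : G) ∧ V = -V ∧ V + V ⊆ W ∧ V ⊆ W ∧ (g ≠ 0 → g ∉ V) := by
  classical
  set W' : Set G := if hg : g = 0 then W else W ∩ {g}ᶜ with hW'def
  have hW'nhds : W' ∈ 𝓝 (0 : G) := by
    rw [hW'def]
    split_ifs with hg
    · exact hW
    · exact inter_mem hW (compl_singleton_mem_nhds (fun h => hg h.symm))
  have hW'subset : W' ⊆ W := by
    rw [hW'def]; split_ifs with hg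
    · exact subset_rfl
    · exact inter_subset_left
  have hgout : g ≠ 0 → g ∉ W' := by
    intro hg
    rw [hW'def, dif_neg hg]
    exact fun h => h.2 rfl
  obtain ⟨V₀, hV₀, hhalf⟩ := exists_nhds_zero_half hW'nhds
  set V₁ : Set G := V₀ ∩ W' with hV₁def
  have hV₁ : V₁ ∈ 𝓝 (0 : G) := inter_mem hV₀ hW'nhds
  refine ⟨V₁ ∩ -V₁, ?_, ?_, ?_, ?_, ?_⟩
  · refine inter_mem hV₁ ?_
    have : Tendsto (fun x : G => -x) (𝓝 0) (𝓝 0) := by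
      simpa using (continuous_neg (G := G)).tendsto (0 : G)
    exact this hV₁
  · ext x
    simp only [Set.mem_inter_iff, Set.mem_neg, neg_neg]
    tauto
  · rw [Set.add_subset_iff]
    intro x hx y hy
    exact hW'subset (hhalf x (hx.1.1) y (hy.1.1))
  · exact fun x hx => hW'subset hx.1.2
  · exact fun hg h => hgout hg h.1.2

private lemma exists_weakening [Countable G] [T2Space G]
    {Vw : Set G} (hVw : Vw ∈ 𝓝 (0 : G)) :
    ∃ σ : AddGroupTopology G,
      (inferInstance : TopologicalSpace G) ≤ σ.toTopologicalSpace ∧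
      @T2Space G σ.toTopologicalSpace ∧
      (∃ V0 ∈ @nhds G σ.toTopologicalSpace 0, V0 ⊆ Vw) ∧
      (@nhds G σ.toTopologicalSpace 0).IsCountablyGenerated := by
  classical
  obtain ⟨f, hf⟩ := exists_surjective_nat G
  -- step with full data
  have step : ∀ (W : {V : Set G // V ∈ 𝓝 (0 : G)}) (g : G),
      {V : Set G // V ∈ 𝓝 (0 : G) ∧ V = -V ∧ V + V ⊆ W.1 ∧ V ⊆ W.1 ∧ (g ≠ 0 → g ∉ V)} :=
    fun W g => ⟨(seq_step W.2 g).choose, (seq_step W.2 g).choose_spec⟩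
  let Vc : ℕ → {V : Set G // V ∈ 𝓝 (0 : G)} := fun n =>
    Nat.rec ⟨(step ⟨Vw, hVw⟩ 0).1, (step ⟨Vw, hVw⟩ 0).2.1⟩
      (fun n ih => ⟨(step ih (f n)).1, (step ih (f n)).2.1⟩) n
  let V : ℕ → Set G := fun n => (Vc n).1
  have hVnhds : ∀ n, V n ∈ 𝓝 (0 : G) := fun n => (Vc n).2
  have hzero : ∀ n, (0 : G) ∈ V n := fun n => mem_of_mem_nhds (hVnhds n)
  have hV0sub : V 0 ⊆ Vw := (step ⟨Vw, hVw⟩ 0).2.2.2.2.1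
  have hsymm : ∀ n, V n = -(V n) := by
    intro n
    cases n with
    | zero => exact (step ⟨Vw, hVw⟩ 0).2.2.1
    | succ n => exact (step (Vc n) (f n)).2.2.1
  have hhalf : ∀ n, V (n + 1) + V (n + 1) ⊆ V n := fun n =>
    (step (Vc n) (f n)).2.2.2.1
  have hsub : ∀ n, V (n + 1) ⊆ V n := fun n => (step (Vc n) (f n)).2.2.2.2.1
  have hout : ∀ n, f n ≠ 0 → f n ∉ V (n + 1) := fun n => (step (Vc n) (f n)).2.2.2.2.2
  have hanti : Antitone V := antitone_nat_of_succ_le hsub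
  let B : AddGroupFilterBasis G := addGroupFilterBasisOfComm (Set.range V)
    ⟨V 0, Set.mem_range_self 0⟩
    (by
      rintro x y ⟨m, rfl⟩ ⟨n, rfl⟩
      exact ⟨V (max m n), ⟨max m n, rfl⟩,
        Set.subset_inter (hanti (le_max_left m n)) (hanti (le_max_right m n))⟩)
    (by rintro U ⟨n, rfl⟩; exact hzero n)
    (by rintro U ⟨n, rfl⟩; exact ⟨V (n + 1), ⟨n + 1, rfl⟩, hhalf n⟩)
    (by
      rintro U ⟨n, rfl⟩
      refine ⟨V n, ⟨n, rfl⟩, fun x hx => ?_⟩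
      show -x ∈ V n
      rw [hsymm n] at hx
      simpa using hx)
  have hmemB : ∀ n, V n ∈ B := fun n => Set.mem_range_self n
  have hmemB' : ∀ {U : Set G}, U ∈ B → ∃ n, V n = U := fun hU => hU
  refine ⟨⟨B.topology, B.isTopologicalAddGroup⟩, ?_, ?_, ?_, ?_⟩
  · rw [_root_.le_iff_nhds]
    intro x s hs
    obtain ⟨W, hW, hWs⟩ := (B.nhds_hasBasis x).mem_iff.1 hs
    obtain ⟨n, rfl⟩ := hmemB' hW
    exact mem_of_superset (aux_translate (hVnhds n) x) hWs
  · letI := B.topology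
    haveI := B.isTopologicalAddGroup
    apply IsTopologicalAddGroup.t2Space_of_zero_sep
    intro x hx
    obtain ⟨n, rfl⟩ := hf x
    exact ⟨V (n + 1), B.mem_nhds_zero (hmemB (n + 1)), hout n hx⟩
  · exact ⟨V 0, B.mem_nhds_zero (hmemB 0), hV0sub⟩
  · have hbasis : (@nhds G B.topology 0).HasBasis (fun _ : ℕ => True) V := by
      refine B.nhds_zero_hasBasis.to_hasBasis ?_ ?_
      · intro U hU
        obtain ⟨n, rfl⟩ := hmemB' hU
        exact ⟨n, trivial, subset_rfl⟩
      · exact fun n _ => ⟨V n, hmemB n, subset_rfl⟩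
    exact hbasis.isCountablyGenerated

end aux

/- Mathlib order is reverse inclusion: nondiscrete is `τ ≠ ⊥`, transversal is
`⊓ = ⊥`, and "τ'' ≤ τ' (τ'' coarser than τ')" is `τ' ≤ τ''`. -/
theorem stmt10 {G : Type*} [AddCommGroup G] [Countable G]
    (τ τ' : AddGroupTopology G)
    (hnd : τ ≠ ⊥)
    (hT2 : @T2Space G τ.toTopologicalSpace)
    (hcb : (@nhds G τ.toTopologicalSpace 0).IsCountablyGenerated)
    (hT2' : @T2Space G τ'.toTopologicalSpace)
    (htrans : τ ⊓ τ' = ⊥) :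
    ∃ τ'' : AddGroupTopology G, τ' ≤ τ'' ∧
      @T2Space G τ''.toTopologicalSpace ∧
      τ ⊓ τ'' = ⊥ ∧
      (@nhds G τ''.toTopologicalSpace 0).IsCountablyGenerated := by
  classical
  have hbot : τ.toTopologicalSpace ⊓ τ'.toTopologicalSpace = (⊥ : TopologicalSpace G) := by
    rw [← AddGroupTopology.toTopologicalSpace_inf, htrans,
      AddGroupTopology.toTopologicalSpace_bot]
  have h0 : ({0} : Set G) ∈
      @nhds G τ.toTopologicalSpace 0 ⊓ @nhds G τ'.toTopologicalSpace 0 := by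
    rw [← _root_.nhds_inf, hbot]
    letI : TopologicalSpace G := ⊥
    haveI : DiscreteTopology G := ⟨rfl⟩
    rw [nhds_discrete]
    exact rfl
  obtain ⟨U, hU, Vw, hVw, hUV⟩ := Filter.mem_inf_iff.1 h0
  have hUVsub : U ∩ Vw ⊆ ({0} : Set G) := hUV.ge
  letI : TopologicalSpace G := τ'.toTopologicalSpace
  haveI : IsTopologicalAddGroup G := τ'.toIsTopologicalAddGroup
  haveI : T2Space G := hT2'
  obtain ⟨σ, hle, hσT2, ⟨V0, hV0nhds, hV0sub⟩, hcg⟩ := exists_weakening (G := G) hVw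
  refine ⟨σ, AddGroupTopology.toTopologicalSpace_le.2 hle, hσT2, ?_, hcg⟩
  apply AddGroupTopology.toTopologicalSpace_injective
  rw [AddGroupTopology.toTopologicalSpace_inf, AddGroupTopology.toTopologicalSpace_bot]
  refine le_bot_iff.mp (le_of_nhds_le_nhds fun a => ?_)
  have hb : @nhds G ⊥ a = pure a := by
    letI : TopologicalSpace G := (⊥ : TopologicalSpace G)
    haveI : DiscreteTopology G := ⟨rfl⟩
    exact congrFun (nhds_discrete G) a
  have hA : (a + ·) '' U ∈ @nhds G τ.toTopologicalSpace a :=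
    @aux_translate G _ τ.toTopologicalSpace τ.toIsTopologicalAddGroup U hU a
  have hB : (a + ·) '' V0 ∈ @nhds G σ.toTopologicalSpace a :=
    @aux_translate G _ σ.toTopologicalSpace σ.toIsTopologicalAddGroup V0 hV0nhds a
  have key : ({a} : Set G) ∈ @nhds G τ.toTopologicalSpace a ⊓ @nhds G σ.toTopologicalSpace a := by
    refine mem_of_superset (inter_mem_inf hA hB) ?_
    rw [← Set.image_inter (add_right_injective a)]
    rintro y ⟨z, hz, rfl⟩
    have hz0 : z = 0 := hUVsub ⟨hz.1, hV0sub hz.2⟩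
    simp [hz0]
  rw [hb, Filter.le_pure_iff,
    _root_.nhds_inf (t₁ := τ.toTopologicalSpace) (t₂ := σ.toTopologicalSpace) (a := a)]
  exact key
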